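/- Fix a sampling design p with π_i > 0 for all i. Let μ = μ_1 ⊗ ⋯ ⊗ μ_N be a product probability measure on Θ = ∏_{i=1}^N [a_i,b_i] such that each μ_i has mean m_i = (a_i+b_i)/2 and positive variance σ_i². Then every unbiased estimator δ satisfies ∫_Θ R(δ,p;y) dμ(y) ≥ Σ_{i=1}^N σ_i² (1/π_i − 1), and the midpoint-differenced Horvitz–Thompson estimator T̂ attains this bound: ∫_Θ R(T̂,p;y) dμ(y) = Σ_{i=1}^N σ_i² (1/π_i − 1). -/

import Mathlib

open MeasureTheory

section Aux

lemma aux_coord_integral {N : ℕ} (μ : Fin N → Measure ℝ) [∀ i, IsProbabilityMeasure (μ i)]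
    (i : Fin N) (f : ℝ → ℝ) :
    ∫ y, f (y i) ∂(Measure.pi μ) = ∫ x, f x ∂(μ i) := by
  obtain ⟨n, rfl⟩ : ∃ n, N = n + 1 :=
    Nat.exists_eq_succ_of_ne_zero (Nat.pos_iff_ne_zero.mp i.pos)
  have mp := measurePreserving_piFinSuccAbove μ i
  set e := MeasurableEquiv.piFinSuccAbove (fun _ : Fin (n+1) => ℝ) i with he
  have h1 := mp.integral_comp' (g := fun z : ℝ × (Fin n → ℝ) => f z.1)
  have h0 : (fun x : Fin (n+1) → ℝ => f ((e x).1)) = fun y => f (y i) := rfl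
  rw [h0] at h1
  rw [h1]
  have h3 := integral_prod_mul (μ := μ i) (ν := Measure.pi fun j => μ (i.succAbove j))
      (f := f) (g := fun _ : Fin n → ℝ => (1:ℝ))
  simpa using h3

lemma aux_indep_zero {N : ℕ} (μ : Fin N → Measure ℝ) [∀ i, IsProbabilityMeasure (μ i)]
    (i : Fin N) (c : ℝ) (hc : ∫ x, (x - c) ∂(μ i) = 0)
    (f : (Fin N → ℝ) → ℝ)
    (hdep : ∀ y y' : Fin N → ℝ, (∀ j, j ≠ i → y j = y' j) → f y = f y') :
    ∫ y, f y * (y i - c) ∂(Measure.pi μ) = 0 := by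
  obtain ⟨n, rfl⟩ : ∃ n, N = n + 1 :=
    Nat.exists_eq_succ_of_ne_zero (Nat.pos_iff_ne_zero.mp i.pos)
  have mp := measurePreserving_piFinSuccAbove μ i
  set e := MeasurableEquiv.piFinSuccAbove (fun _ : Fin (n+1) => ℝ) i with he
  have h1 := mp.integral_comp'
      (g := fun z : ℝ × (Fin n → ℝ) => (z.1 - c) * f (e.symm (c, z.2)))
  have h2 : ∀ y : Fin (n+1) → ℝ,
      ((e y).1 - c) * f (e.symm (c, (e y).2)) = f y * (y i - c) := by
    intro y
    have hy1 : (e y).1 = y i := rfl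
    have hfy : f (e.symm (c, (e y).2)) = f y := by
      apply hdep
      intro j hj
      obtain ⟨k, hk⟩ := Fin.exists_succAbove_eq hj
      subst hk
      simp [e, MeasurableEquiv.piFinSuccAbove, Fin.insertNthEquiv, Fin.insertNth_apply_succAbove, Fin.removeNth]
    rw [hy1, hfy, mul_comm]
  simp_rw [h2] at h1
  have h3 := integral_prod_mul (μ := μ i) (ν := Measure.pi fun j => μ (i.succAbove j))
      (f := fun t : ℝ => t - c) (g := fun u : Fin n → ℝ => f (e.symm (c, u)))
  rw [h1, h3, hc, zero_mul]
lemma aux_abs_mul_le (A B : ℝ) : |A| * |B| ≤ 1/2 * (A ^ 2 + B * B) := by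
  nlinarith [sq_nonneg (|A| - |B|), sq_abs A, sq_abs B, abs_nonneg A, abs_nonneg B]

end Aux


/-- Bayes optimality of the midpoint-differenced
Horvitz–Thompson estimator under centered product priors. Let `μ = ⊗ μ i` be a
product probability measure on `Θ = ∏ [a i, b i]` whose factors have mean
`m i = (a i + b i)/2` and positive variance `σ2 i`. Then every (measurable)
unbiased estimator `δ` has Bayes risk
`∫ R(δ,p;y) dμ(y) ≥ ∑ i, σ2 i * (1/π i − 1)`, and the midpoint-differenced
Horvitz–Thompson estimator attains this bound with equality. (Integrals of the
nonnegative risks are taken as lower Lebesgue integrals.) -/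
theorem HT_bayes_optimal_product_prior
    (N : ℕ) (a b : Fin N → ℝ) (hab : ∀ i, a i < b i)
    (m : Fin N → ℝ) (hm : ∀ i, m i = (a i + b i) / 2)
    (p : Finset (Fin N) → ℝ) (hp0 : ∀ s, 0 ≤ p s)
    (hp1 : ∑ s : Finset (Fin N), p s = 1)
    (π : Fin N → ℝ)
    (hπ : ∀ i, π i = ∑ s : Finset (Fin N), if i ∈ s then p s else 0)
    (hπpos : ∀ i, 0 < π i)
    (μ : Fin N → Measure ℝ) [∀ i, IsProbabilityMeasure (μ i)]
    (hμsupp : ∀ i, μ i (Set.Icc (a i) (b i))ᶜ = 0)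
    (hμmean : ∀ i, ∫ x, x ∂(μ i) = m i)
    (σ2 : Fin N → ℝ) (hσ2 : ∀ i, σ2 i = ∫ x, (x - m i) ^ 2 ∂(μ i))
    (hσpos : ∀ i, 0 < σ2 i)
    (δ : Finset (Fin N) → (Fin N → ℝ) → ℝ)
    (hmeas : ∀ s, Measurable (δ s))
    (hloc : ∀ s (y y' : Fin N → ℝ), (∀ i ∈ s, y i = y' i) → δ s y = δ s y')
    (hunb : ∀ y : Fin N → ℝ, (∀ i, y i ∈ Set.Icc (a i) (b i)) →
      ∑ s : Finset (Fin N), p s * δ s y = ∑ i, y i) :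
    (ENNReal.ofReal (∑ i, σ2 i * (1 / π i - 1)) ≤
      ∫⁻ y, ENNReal.ofReal
        (∑ s : Finset (Fin N), p s * (δ s y - ∑ i, y i) ^ 2)
        ∂(Measure.pi μ)) ∧
    (∫⁻ y, ENNReal.ofReal
        (∑ s : Finset (Fin N),
          p s * (((∑ i, m i) + ∑ i ∈ s, (y i - m i) / π i) - ∑ i, y i) ^ 2)
        ∂(Measure.pi μ)
      = ENNReal.ofReal (∑ i, σ2 i * (1 / π i - 1))) := by
  classical
  have hπne : ∀ i, π i ≠ 0 := fun i => ne_of_gt (hπpos i)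
  set P := Measure.pi μ with hPdef
  -- the coefficients of the HT deviation
  set c : Finset (Fin N) → Fin N → ℝ :=
    fun s i => (if i ∈ s then 1 / π i else 0) - 1 with hcdef
  set w : Finset (Fin N) → (Fin N → ℝ) → ℝ :=
    fun s y => ∑ i, c s i * (y i - m i) with hwdef
  set g : Finset (Fin N) → (Fin N → ℝ) → ℝ :=
    fun s y => δ s y - ((∑ i, m i) + ∑ j ∈ s, (y j - m j) / π j) with hgdef
  -- a.e. membership in the rectangle
  have hμae : ∀ i, ∀ᵐ x ∂(μ i), x ∈ Set.Icc (a i) (b i) := by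
    intro i
    rw [ae_iff]
    convert hμsupp i using 2
    rfl
  have hΘae : ∀ᵐ y ∂P, ∀ i, y i ∈ Set.Icc (a i) (b i) := by
    rw [ae_iff]
    have hset0 : {y : Fin N → ℝ | ∀ i, y i ∈ Set.Icc (a i) (b i)}
        = Set.pi Set.univ (fun i => Set.Icc (a i) (b i)) := by
      ext y; simp [Set.mem_pi, Pi.le_def, forall_and]
    have hset : {y : Fin N → ℝ | ¬ ∀ i, y i ∈ Set.Icc (a i) (b i)}
        = (Set.pi Set.univ (fun i => Set.Icc (a i) (b i)))ᶜ := by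
      rw [← hset0]; rfl
    rw [hset, measure_compl (MeasurableSet.univ_pi fun i => measurableSet_Icc)
      (measure_ne_top _ _)]
    have h1 : P (Set.pi Set.univ (fun i => Set.Icc (a i) (b i))) = 1 := by
      rw [hPdef, Measure.pi_pi]
      have hIcc1 : ∀ i, μ i (Set.Icc (a i) (b i)) = 1 := by
        intro i
        have h2 := measure_add_measure_compl (μ := μ i)
          (measurableSet_Icc (a := a i) (b := b i))
        rw [hμsupp i, add_zero, measure_univ] at h2
        exact h2
      simp [hIcc1]
    rw [h1, measure_univ, tsub_self]
  -- integrability of the identity on each factor and centered first moment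
  have hc0 : ∀ i, ∫ x, (x - m i) ∂(μ i) = 0 := by
    intro i
    have hid : Integrable (fun x : ℝ => x) (μ i) := by
      refine Integrable.mono' (integrable_const (max |a i| |b i|))
        measurable_id.aestronglyMeasurable ?_
      filter_upwards [hμae i] with x hx
      rw [Real.norm_eq_abs, abs_le]
      constructor
      · have := neg_abs_le (a i); have := le_max_left |a i| |b i|; linarith [hx.1]
      · have := le_abs_self (b i); have := le_max_right |a i| |b i|; linarith [hx.2]
    rw [integral_sub hid (integrable_const _), hμmean i, integral_const, probReal_univ]
    simp
  -- measurability helpers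
  have hsummeas : Measurable (fun y : Fin N → ℝ => ∑ i, y i) :=
    Finset.measurable_sum _ fun i _ => measurable_pi_apply i
  have hzmeas : ∀ i, Measurable (fun y : Fin N → ℝ => y i - m i) :=
    fun i => (measurable_pi_apply i).sub measurable_const
  have hwmeas : ∀ s, Measurable (w s) := fun s =>
    Finset.measurable_sum _ fun i _ => (measurable_const.mul (hzmeas i))
  have hgmeas : ∀ s, Measurable (g s) := fun s =>
    (hmeas s).sub (measurable_const.add
      (Finset.measurable_sum _ fun j _ => (measurable_pi_apply j).sub measurable_const |>.div_const _))
  -- products of centered coordinates are integrable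
  have hzz : ∀ i j, Integrable (fun y => (y i - m i) * (y j - m j)) P := by
    intro i j
    have hCi : (0:ℝ) ≤ (b i - a i)/2 := by linarith [hab i]
    have hCj : (0:ℝ) ≤ (b j - a j)/2 := by linarith [hab j]
    refine Integrable.mono' (integrable_const ((b i - a i)/2 * ((b j - a j)/2)))
      ((hzmeas i).mul (hzmeas j)).aestronglyMeasurable ?_
    filter_upwards [hΘae] with y hy
    rw [Real.norm_eq_abs, abs_mul]
    have h1 : |y i - m i| ≤ (b i - a i)/2 := by
      rw [abs_le, hm i]; constructor <;> [linarith [(hy i).1]; linarith [(hy i).2]]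
    have h2 : |y j - m j| ≤ (b j - a j)/2 := by
      rw [abs_le, hm j]; constructor <;> [linarith [(hy j).1]; linarith [(hy j).2]]
    exact mul_le_mul h1 h2 (abs_nonneg _) hCi
  -- second moments over the product measure
  have hintzz : ∀ i j, ∫ y, (y i - m i) * (y j - m j) ∂P
      = if i = j then σ2 i else 0 := by
    intro i j
    by_cases hij : i = j
    · subst hij
      rw [if_pos rfl, hσ2 i]
      have h := aux_coord_integral μ i (fun x => (x - m i) * (x - m i))
      rw [hPdef, h]
      congr 1; funext x; ring
    · rw [if_neg hij]
      have h := aux_indep_zero μ j (m j) (hc0 j) (fun y => y i - m i)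
        (fun y y' hyy => by rw [hyy i hij])
      exact h
  -- w rewriting of the HT deviation
  have hweq : ∀ (s : Finset (Fin N)) (y : Fin N → ℝ),
      ((∑ i, m i) + ∑ i ∈ s, (y i - m i) / π i) - ∑ i, y i = w s y := by
    intro s y
    have h1 : ∑ i ∈ s, (y i - m i) / π i
        = ∑ i : Fin N, (if i ∈ s then 1 / π i else 0) * (y i - m i) := by
      simp only [ite_mul, zero_mul]
      rw [Finset.sum_ite_mem, Finset.univ_inter]
      exact Finset.sum_congr rfl fun i _ => by rw [one_div, div_eq_inv_mul]
    have h2 : w s y = (∑ i : Fin N, (if i ∈ s then 1 / π i else 0) * (y i - m i))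
        - ∑ i : Fin N, (y i - m i) := by
      rw [hwdef]
      simp only [hcdef, sub_mul, one_mul]
      rw [Finset.sum_sub_distrib]
    rw [h2, ← h1, Finset.sum_sub_distrib]
    ring
  -- expansion of w², integrability and integral
  have hwexp : ∀ (s : Finset (Fin N)) (y : Fin N → ℝ), w s y ^ 2
      = ∑ i : Fin N, ∑ j : Fin N, (c s i * c s j) * ((y i - m i) * (y j - m j)) := by
    intro s y
    rw [hwdef]
    simp only []
    rw [sq, Finset.sum_mul_sum]
    exact Finset.sum_congr rfl fun i _ => Finset.sum_congr rfl fun j _ => by ring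
  have hwsq_int : ∀ s, Integrable (fun y => w s y ^ 2) P := by
    intro s
    have : (fun y => w s y ^ 2) = fun y => ∑ i : Fin N, ∑ j : Fin N,
        (c s i * c s j) * ((y i - m i) * (y j - m j)) := funext fun y => hwexp s y
    rw [this]
    exact integrable_finset_sum _ fun i _ =>
      integrable_finset_sum _ fun j _ => (hzz i j).const_mul _
  have hwB : ∀ s, ∫ y, w s y ^ 2 ∂P = ∑ i, c s i ^ 2 * σ2 i := by
    intro s
    have h0 : (fun y => w s y ^ 2) = fun y => ∑ i : Fin N, ∑ j : Fin N,
        (c s i * c s j) * ((y i - m i) * (y j - m j)) := funext fun y => hwexp s y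
    rw [h0, integral_finset_sum _ (fun i _ =>
      integrable_finset_sum _ fun j _ => (hzz i j).const_mul _)]
    have h1 : ∀ i : Fin N, ∫ y, (∑ j : Fin N,
        (c s i * c s j) * ((y i - m i) * (y j - m j))) ∂P
        = ∑ j : Fin N, (c s i * c s j) * (if i = j then σ2 i else 0) := by
      intro i
      rw [integral_finset_sum _ (fun j _ => (hzz i j).const_mul _)]
      exact Finset.sum_congr rfl fun j _ => by rw [integral_const_mul, hintzz i j]
    simp_rw [h1]
    refine Finset.sum_congr rfl fun i _ => ?_
    rw [Finset.sum_eq_single i]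
    · rw [if_pos rfl]; ring
    · intro j _ hji; rw [if_neg (Ne.symm hji), mul_zero]
    · intro h; exact absurd (Finset.mem_univ i) h
  -- the Bayes bound
  have hBsum : ∑ s : Finset (Fin N), p s * ∑ i, c s i ^ 2 * σ2 i
      = ∑ i, σ2 i * (1 / π i - 1) := by
    simp_rw [Finset.mul_sum]
    rw [Finset.sum_comm]
    refine Finset.sum_congr rfl fun i _ => ?_
    have hsq : ∀ s : Finset (Fin N), p s * (c s i ^ 2 * σ2 i)
        = ((if i ∈ s then p s else 0) * ((1 / π i - 1) ^ 2 - 1) + p s) * σ2 i := by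
      intro s
      simp only [hcdef]
      by_cases h : i ∈ s
      · rw [if_pos h, if_pos h]; ring
      · rw [if_neg h, if_neg h]; ring
    simp_rw [hsq]
    rw [← Finset.sum_mul]
    have h2 : ∑ s : Finset (Fin N), ((if i ∈ s then p s else 0) * ((1 / π i - 1) ^ 2 - 1) + p s)
        = π i * ((1 / π i - 1) ^ 2 - 1) + 1 := by
      rw [Finset.sum_add_distrib, hp1, ← Finset.sum_mul, ← hπ i]
    rw [h2]
    have h3 : π i * ((1 / π i - 1) ^ 2 - 1) + 1 = 1 / π i - 1 := by
      field_simp [hπne i]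
      ring
    rw [h3]
    ring
  -- nonnegativity of the HT risk integrand
  have hwnn : 0 ≤ᵐ[P] fun y => ∑ s : Finset (Fin N), p s * w s y ^ 2 :=
    Filter.Eventually.of_forall fun y =>
      Finset.sum_nonneg fun s _ => mul_nonneg (hp0 s) (sq_nonneg _)
  have hwint : Integrable (fun y => ∑ s : Finset (Fin N), p s * w s y ^ 2) P :=
    integrable_finset_sum _ fun s _ => (hwsq_int s).const_mul _
  have part2 : (∫⁻ y, ENNReal.ofReal
        (∑ s : Finset (Fin N),
          p s * (((∑ i, m i) + ∑ i ∈ s, (y i - m i) / π i) - ∑ i, y i) ^ 2)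
        ∂P) = ENNReal.ofReal (∑ i, σ2 i * (1 / π i - 1)) := by
    have hstep : ∀ y : Fin N → ℝ, ENNReal.ofReal
        (∑ s : Finset (Fin N),
          p s * (((∑ i, m i) + ∑ i ∈ s, (y i - m i) / π i) - ∑ i, y i) ^ 2)
        = ENNReal.ofReal (∑ s : Finset (Fin N), p s * w s y ^ 2) := by
      intro y
      congr 1
      exact Finset.sum_congr rfl fun s _ => by rw [hweq s y]
    rw [lintegral_congr hstep, ← ofReal_integral_eq_lintegral_ofReal hwint hwnn]
    congr 1
    rw [integral_finset_sum _ fun s _ => (hwsq_int s).const_mul _]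
    rw [← hBsum]
    exact Finset.sum_congr rfl fun s _ => by rw [integral_const_mul, hwB s]
  refine ⟨?_, part2⟩
  by_cases htop : (∫⁻ y, ENNReal.ofReal
      (∑ s : Finset (Fin N), p s * (δ s y - ∑ i, y i) ^ 2) ∂P) = ⊤
  · rw [htop]; exact le_top
  · have hrmeas : Measurable (fun y : Fin N → ℝ =>
        ∑ s : Finset (Fin N), p s * (δ s y - ∑ i, y i) ^ 2) :=
      Finset.measurable_sum _ fun s _ =>
        measurable_const.mul (((hmeas s).sub hsummeas).pow_const 2)
    have hrnn : 0 ≤ᵐ[P] fun y : Fin N → ℝ =>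
        ∑ s : Finset (Fin N), p s * (δ s y - ∑ i, y i) ^ 2 :=
      Filter.Eventually.of_forall fun y =>
        Finset.sum_nonneg fun s _ => mul_nonneg (hp0 s) (sq_nonneg _)
    have hrint : Integrable (fun y : Fin N → ℝ =>
        ∑ s : Finset (Fin N), p s * (δ s y - ∑ i, y i) ^ 2) P :=
      ⟨hrmeas.aestronglyMeasurable,
        (hasFiniteIntegral_iff_ofReal hrnn).mpr (Ne.lt_top htop)⟩
    rw [← ofReal_integral_eq_lintegral_ofReal hrint hrnn]
    apply ENNReal.ofReal_le_ofReal
    set F : Finset (Finset (Fin N)) := Finset.univ.filter (fun s => p s ≠ 0) with hFdef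
    have hpF : ∀ s ∈ F, 0 < p s := fun s hs =>
      lt_of_le_of_ne (hp0 s) (Ne.symm (Finset.mem_filter.mp hs).2)
    have hDint : ∀ s ∈ F, Integrable (fun y : Fin N → ℝ => (δ s y - ∑ i, y i) ^ 2) P := by
      intro s hs
      have hps := hpF s hs
      have h1 : Integrable (fun y : Fin N → ℝ => p s * (δ s y - ∑ i, y i) ^ 2) P := by
        refine Integrable.mono' hrint
          (measurable_const.mul (((hmeas s).sub hsummeas).pow_const 2)).aestronglyMeasurable ?_
        refine Filter.Eventually.of_forall fun y => ?_
        rw [Real.norm_eq_abs, abs_of_nonneg (mul_nonneg hps.le (sq_nonneg _))]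
        exact Finset.single_le_sum
          (f := fun t => p t * (δ t y - ∑ i, y i) ^ 2)
          (fun t _ => mul_nonneg (hp0 t) (sq_nonneg _)) (Finset.mem_univ s)
      have h2 := h1.const_mul (p s)⁻¹
      have h3 : (fun y : Fin N → ℝ => (p s)⁻¹ * (p s * (δ s y - ∑ i, y i) ^ 2))
          = fun y : Fin N → ℝ => (δ s y - ∑ i, y i) ^ 2 := by
        funext y; rw [inv_mul_cancel_left₀ hps.ne']
      rwa [h3] at h2
    have hDgw : ∀ (s : Finset (Fin N)) (y : Fin N → ℝ),
        δ s y - ∑ i, y i = g s y + w s y := by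
      intro s y
      have h1 := hweq s y
      rw [hgdef]
      simp only []
      linarith
    have hg2 : ∀ s ∈ F, Integrable (fun y => g s y ^ 2) P := by
      intro s hs
      have hDw : Integrable (fun y : Fin N → ℝ => (δ s y - ∑ i, y i) * w s y) P := by
        refine Integrable.mono' (((hDint s hs).add (hwsq_int s)).const_mul (1/2 : ℝ))
          (((hmeas s).sub hsummeas).mul (hwmeas s)).aestronglyMeasurable ?_
        refine Filter.Eventually.of_forall fun y => ?_
        rw [Real.norm_eq_abs, abs_mul]
        simp only [Pi.add_apply]
        nlinarith [sq_nonneg (|δ s y - ∑ i, y i| - |w s y|),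
          sq_abs (δ s y - ∑ i, y i), sq_abs (w s y),
          abs_nonneg (δ s y - ∑ i, y i), abs_nonneg (w s y)]
      have h1 : (fun y => g s y ^ 2)
          = fun y : Fin N → ℝ => ((δ s y - ∑ i, y i) ^ 2
            - 2 * ((δ s y - ∑ i, y i) * w s y)) + w s y ^ 2 := by
        funext y
        rw [show g s y = (δ s y - ∑ i, y i) - w s y by linarith [hDgw s y]]
        ring
      rw [h1]
      exact ((hDint s hs).sub (hDw.const_mul 2)).add (hwsq_int s)
    have hgz : ∀ s ∈ F, ∀ i, Integrable (fun y => g s y * (y i - m i)) P := by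
      intro s hs i
      refine Integrable.mono' (((hg2 s hs).add (hzz i i)).const_mul (1/2 : ℝ))
        ((hgmeas s).mul (hzmeas i)).aestronglyMeasurable ?_
      refine Filter.Eventually.of_forall fun y => ?_
      rw [Real.norm_eq_abs, abs_mul]
      simp only [Pi.add_apply]
      exact aux_abs_mul_le _ _
    have hgw_pt : ∀ (s : Finset (Fin N)) (y : Fin N → ℝ),
        g s y * w s y = ∑ i, c s i * (g s y * (y i - m i)) := by
      intro s y
      rw [hwdef]
      simp only []
      rw [Finset.mul_sum]
      exact Finset.sum_congr rfl fun i _ => by ring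
    have hgw : ∀ s ∈ F, Integrable (fun y => g s y * w s y) P := by
      intro s hs
      have h1 : (fun y => g s y * w s y)
          = fun y => ∑ i, c s i * (g s y * (y i - m i)) := funext fun y => hgw_pt s y
      rw [h1]
      exact integrable_finset_sum _ fun i _ => (hgz s hs i).const_mul _
    have hcross_s : ∀ s ∈ F, ∫ y, g s y * w s y ∂P
        = ∑ i, c s i * ∫ y, g s y * (y i - m i) ∂P := by
      intro s hs
      have h1 : (fun y => g s y * w s y)
          = fun y => ∑ i, c s i * (g s y * (y i - m i)) := funext fun y => hgw_pt s y
      rw [h1, integral_finset_sum _ fun i _ => (hgz s hs i).const_mul _]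
      exact Finset.sum_congr rfl fun i _ => integral_const_mul _ _
    have hgz0 : ∀ (i : Fin N) (s : Finset (Fin N)), i ∉ s →
        ∫ y, g s y * (y i - m i) ∂P = 0 := by
      intro i s his
      refine aux_indep_zero μ i (m i) (hc0 i) (g s) ?_
      intro y y' hyy
      have h2 : ∑ j ∈ s, (y j - m j) / π j = ∑ j ∈ s, (y' j - m j) / π j :=
        Finset.sum_congr rfl fun j hj => by rw [hyy j (fun hji => his (hji ▸ hj))]
      rw [hgdef]
      simp only []
      rw [hloc s y y' (fun j hj => hyy j (fun hji => his (hji ▸ hj))), h2]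
    have hgsum0 : ∀ᵐ y ∂P, ∑ s : Finset (Fin N), p s * g s y = 0 := by
      filter_upwards [hΘae] with y hy
      have hu := hunb y hy
      have e1 : ∑ s : Finset (Fin N), p s * g s y
          = (∑ s : Finset (Fin N), p s * δ s y)
            - ((∑ s : Finset (Fin N), p s) * (∑ i, m i)
              + ∑ s : Finset (Fin N), p s * ∑ j ∈ s, (y j - m j) / π j) := by
        rw [hgdef]
        simp only [mul_sub, mul_add]
        rw [Finset.sum_sub_distrib, Finset.sum_add_distrib, ← Finset.sum_mul]
      have e3 : ∑ s : Finset (Fin N), p s * ∑ j ∈ s, (y j - m j) / π j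
          = ∑ j, (y j - m j) := by
        have h1 : ∀ s : Finset (Fin N), p s * ∑ j ∈ s, (y j - m j) / π j
            = ∑ j : Fin N, (if j ∈ s then p s * ((y j - m j) / π j) else 0) := by
          intro s
          rw [Finset.sum_ite_mem, Finset.univ_inter, Finset.mul_sum]
        simp_rw [h1]
        rw [Finset.sum_comm]
        have h2 : ∀ j : Fin N, ∑ s : Finset (Fin N),
            (if j ∈ s then p s * ((y j - m j) / π j) else 0)
            = π j * ((y j - m j) / π j) := by
          intro j
          rw [hπ j, Finset.sum_mul]
          exact Finset.sum_congr rfl fun s _ => by split <;> simp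
        simp_rw [h2]
        exact Finset.sum_congr rfl fun j _ => by rw [mul_comm]; exact div_mul_cancel₀ _ (hπne j)
      rw [e1, hu, hp1, one_mul, e3, Finset.sum_sub_distrib]
      ring
    have hkey : ∀ i : Fin N, ∑ s ∈ F, p s * (c s i * ∫ y, g s y * (y i - m i) ∂P) = 0 := by
      intro i
      rw [← Finset.sum_filter_add_sum_filter_not F (fun s => i ∈ s)]
      have h2 : ∑ s ∈ F.filter (fun s => ¬ i ∈ s),
          p s * (c s i * ∫ y, g s y * (y i - m i) ∂P) = 0 :=
        Finset.sum_eq_zero fun s hs => by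
          rw [hgz0 i s (Finset.mem_filter.mp hs).2, mul_zero, mul_zero]
      rw [h2, add_zero]
      have h3 : ∑ s ∈ F.filter (fun s => i ∈ s),
          p s * (c s i * ∫ y, g s y * (y i - m i) ∂P)
          = (1 / π i - 1) * ∑ s ∈ F.filter (fun s => i ∈ s),
              p s * ∫ y, g s y * (y i - m i) ∂P := by
        rw [Finset.mul_sum]
        refine Finset.sum_congr rfl fun s hs => ?_
        rw [hcdef]
        simp only []
        rw [if_pos (Finset.mem_filter.mp hs).2]
        ring
      rw [h3]
      have h4 : ∑ s ∈ F.filter (fun s => i ∈ s), p s * ∫ y, g s y * (y i - m i) ∂P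
          = ∫ y, (∑ s ∈ F.filter (fun s => i ∈ s), p s * (g s y * (y i - m i))) ∂P := by
        rw [integral_finset_sum _ (fun s hs =>
          (hgz s (Finset.mem_of_mem_filter s hs) i).const_mul _)]
        exact Finset.sum_congr rfl fun s _ => (integral_const_mul _ _).symm
      rw [h4]
      have h5 : (fun y => ∑ s ∈ F.filter (fun s => i ∈ s), p s * (g s y * (y i - m i)))
          =ᵐ[P] fun y => ∑ s ∈ F.filter (fun s => ¬ i ∈ s),
            (-(p s)) * (g s y * (y i - m i)) := by
        filter_upwards [hgsum0] with y hy
        have hsplit := Finset.sum_filter_add_sum_filter_not F (fun s => i ∈ s)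
          (fun s => p s * (g s y * (y i - m i)))
        have huniv : ∑ s ∈ F, p s * (g s y * (y i - m i)) = 0 := by
          have hFall : ∑ s ∈ F, p s * (g s y * (y i - m i))
              = ∑ s : Finset (Fin N), p s * (g s y * (y i - m i)) := by
            rw [hFdef]
            refine Finset.sum_filter_of_ne fun s _ hne => ?_
            intro hp
            exact hne (by rw [hp, zero_mul])
          rw [hFall]
          have hmul : ∑ s : Finset (Fin N), p s * (g s y * (y i - m i))
              = (∑ s : Finset (Fin N), p s * g s y) * (y i - m i) := by
            rw [Finset.sum_mul]
            exact Finset.sum_congr rfl fun s _ => by ring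
          rw [hmul, hy, zero_mul]
        have hneg : ∑ s ∈ F.filter (fun s => ¬ i ∈ s), (-(p s)) * (g s y * (y i - m i))
            = -∑ s ∈ F.filter (fun s => ¬ i ∈ s), p s * (g s y * (y i - m i)) := by
          rw [← Finset.sum_neg_distrib]
          exact Finset.sum_congr rfl fun s _ => by ring
        rw [hneg]
        linarith [hsplit, huniv]
      rw [integral_congr_ae h5,
        integral_finset_sum _ (fun s hs =>
          (hgz s (Finset.mem_of_mem_filter s hs) i).const_mul (-(p s)))]
      have h6 : ∑ s ∈ F.filter (fun s => ¬ i ∈ s),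
          ∫ y, (-(p s)) * (g s y * (y i - m i)) ∂P = 0 :=
        Finset.sum_eq_zero fun s hs => by
          rw [integral_const_mul, hgz0 i s (Finset.mem_filter.mp hs).2, mul_zero]
      rw [h6, mul_zero]
    have hDsq : ∀ s ∈ F, ∫ y, (δ s y - ∑ i, y i) ^ 2 ∂P
        = ∫ y, g s y ^ 2 ∂P + 2 * ∫ y, g s y * w s y ∂P + ∫ y, w s y ^ 2 ∂P := by
      intro s hs
      have hpt : (fun y : Fin N → ℝ => (δ s y - ∑ i, y i) ^ 2)
          = fun y => (g s y ^ 2 + 2 * (g s y * w s y)) + w s y ^ 2 := by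
        funext y
        rw [hDgw s y]
        ring
      have hi1 : Integrable (fun y : Fin N → ℝ => g s y ^ 2 + 2 * (g s y * w s y)) P := by
        exact (hg2 s hs).add ((hgw s hs).const_mul 2)
      rw [hpt, integral_add hi1 (hwsq_int s),
        integral_add (hg2 s hs) ((hgw s hs).const_mul 2), integral_const_mul]
    have hrsum : ∫ y, (∑ s : Finset (Fin N), p s * (δ s y - ∑ i, y i) ^ 2) ∂P
        = ∑ s ∈ F, p s * ∫ y, (δ s y - ∑ i, y i) ^ 2 ∂P := by
      have hpt : (fun y : Fin N → ℝ => ∑ s : Finset (Fin N), p s * (δ s y - ∑ i, y i) ^ 2)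
          = fun y => ∑ s ∈ F, p s * (δ s y - ∑ i, y i) ^ 2 := by
        funext y
        rw [hFdef]
        refine (Finset.sum_filter_of_ne fun s _ hne => ?_).symm
        intro hp
        exact hne (by rw [hp, zero_mul])
      rw [hpt, integral_finset_sum _ (fun s hs => (hDint s hs).const_mul _)]
      exact Finset.sum_congr rfl fun s _ => integral_const_mul _ _
    rw [hrsum]
    have hexp : ∑ s ∈ F, p s * ∫ y, (δ s y - ∑ i, y i) ^ 2 ∂P
        = ((∑ s ∈ F, p s * ∫ y, g s y ^ 2 ∂P)
          + 2 * (∑ s ∈ F, p s * ∫ y, g s y * w s y ∂P))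
          + ∑ s ∈ F, p s * ∫ y, w s y ^ 2 ∂P := by
      have h1 : ∀ s ∈ F, p s * ∫ y, (δ s y - ∑ i, y i) ^ 2 ∂P
          = (p s * ∫ y, g s y ^ 2 ∂P + 2 * (p s * ∫ y, g s y * w s y ∂P))
            + p s * ∫ y, w s y ^ 2 ∂P := fun s hs => by rw [hDsq s hs]; ring
      rw [Finset.sum_congr rfl h1, Finset.sum_add_distrib, Finset.sum_add_distrib,
        ← Finset.mul_sum]
    rw [hexp]
    have hcrosszero : ∑ s ∈ F, p s * ∫ y, g s y * w s y ∂P = 0 := by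
      have h1 : ∀ s ∈ F, p s * ∫ y, g s y * w s y ∂P
          = ∑ i, p s * (c s i * ∫ y, g s y * (y i - m i) ∂P) := fun s hs => by
        rw [hcross_s s hs, Finset.mul_sum]
      rw [Finset.sum_congr rfl h1, Finset.sum_comm]
      exact Finset.sum_eq_zero fun i _ => hkey i
    rw [hcrosszero, mul_zero, add_zero]
    have hwpart : ∑ s ∈ F, p s * ∫ y, w s y ^ 2 ∂P = ∑ i, σ2 i * (1 / π i - 1) := by
      have h1 : ∑ s ∈ F, p s * ∫ y, w s y ^ 2 ∂P
          = ∑ s : Finset (Fin N), p s * ∫ y, w s y ^ 2 ∂P := by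
        rw [hFdef]
        refine Finset.sum_filter_of_ne fun s _ hne => ?_
        intro hp
        exact hne (by rw [hp, zero_mul])
      rw [h1, ← hBsum]
      exact Finset.sum_congr rfl fun s _ => by rw [hwB s]
    rw [hwpart]
    have hgpos : 0 ≤ ∑ s ∈ F, p s * ∫ y, g s y ^ 2 ∂P :=
      Finset.sum_nonneg fun s hs => mul_nonneg (hp0 s) (integral_nonneg fun y => sq_nonneg _)
    linarith
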